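/- Under the hypotheses of the implicit step and with the discrete Poincaré inequality constant A, the solution of the implicit advection–diffusion step satisfies the damped estimate ‖ũ^{n+1}‖_{Ω_h} ≤ (1 + 3A⁻²τ)⁻¹ (‖u^n‖_{Ω_h} + τ‖f^n‖_{Ω_h}). -/

import Mathlib

open Finset Real

/-- Lattice points of the grid (indices; the physical point is `h • x`). -/
abbrev Pt := Fin 3 → ℤ

/-- Standard basis vector of the lattice. -/
def ee (i : Fin 3) : Pt := fun j => if j = i then 1 else 0

/-- Central difference `D_i φ(x) = (φ(x+he^i) - φ(x-he^i))/(2h)`. -/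
noncomputable def Dc (h : ℝ) (i : Fin 3) (φ : Pt → ℝ) (x : Pt) : ℝ :=
  (φ (x + ee i) - φ (x - ee i)) / (2 * h)

/-- Forward difference `D_i⁺ φ(x) = (φ(x+he^i) - φ(x))/h`. -/
noncomputable def Dp (h : ℝ) (i : Fin 3) (φ : Pt → ℝ) (x : Pt) : ℝ :=
  (φ (x + ee i) - φ x) / h

/-- Second difference `D_i² φ(x) = (φ(x+he^i)+φ(x-he^i)-2φ(x))/h²`. -/
noncomputable def D2 (h : ℝ) (i : Fin 3) (φ : Pt → ℝ) (x : Pt) : ℝ :=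
  (φ (x + ee i) + φ (x - ee i) - 2 * φ x) / h ^ 2

/-- Central-difference divergence `𝒟·u`. -/
noncomputable def divc (h : ℝ) (u : Pt → Fin 3 → ℝ) (x : Pt) : ℝ :=
  ∑ i, Dc h i (fun y => u y i) x

open scoped Classical in
/-- Discrete boundary `∂Ω_h = {x ∈ Ω_h : {x ± he^i} ⊄ Ω_h}`. -/
noncomputable def bdry (Ω : Finset Pt) : Finset Pt :=
  Ω.filter (fun x => ∃ i : Fin 3, x + ee i ∉ Ω ∨ x - ee i ∉ Ω)

/-- Parity class (one of the eight classes G¹,…,G⁸) of a grid point. -/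
def parity (x : Pt) : Fin 3 → ZMod 2 := fun i => (x i : ZMod 2)

open scoped Classical in
/-- The interior sub-grid `Ω_h^∘`. -/
noncomputable def circInt (Ω : Finset Pt) : Finset Pt :=
  (Ω \ bdry Ω).filter
    (fun x => ∀ a : Fin 3 → ℤ, (∀ i, 0 ≤ a i ∧ a i ≤ 2) → x + a ∈ Ω \ bdry Ω)

open scoped Classical in
/-- The parity class `Ω_h^{∘j}` of the interior sub-grid. -/
noncomputable def circJ (Ω : Finset Pt) (p : Fin 3 → ZMod 2) : Finset Pt :=
  (circInt Ω).filter (fun x => parity x = p)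

/-- Discrete L² norm `‖u‖_{Ω_h}`. -/
noncomputable def dnorm (h : ℝ) (Ω : Finset Pt) (u : Pt → Fin 3 → ℝ) : ℝ :=
  Real.sqrt (∑ x ∈ Ω, (∑ i, (u x i) ^ 2) * h ^ 3)

section Aux

lemma sum_shift (S : Finset Pt) (g : Pt → ℝ) (c : Pt)
    (h1 : ∀ x ∉ S, g x = 0) (h2 : ∀ x ∉ S, g (x + c) = 0) :
    ∑ x ∈ S, g (x + c) = ∑ x ∈ S, g x := by
  classical
  have hinj : ∀ a ∈ S, ∀ b ∈ S, a + c = b + c → a = b := by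
    intro a _ b _ hab; exact add_left_injective c hab
  have e1 : ∑ x ∈ S, g (x + c) = ∑ x ∈ S.image (· + c), g x :=
    (Finset.sum_image hinj).symm
  have e2 : ∑ x ∈ S.image (· + c), g x = ∑ x ∈ S ∪ S.image (· + c), g x := by
    apply Finset.sum_subset (Finset.subset_union_right)
    intro x _ hx
    have hm : x - c ∉ S := by
      intro hm; exact hx (Finset.mem_image.2 ⟨x - c, hm, by simp⟩)
    simpa using h2 (x - c) hm
  have e3 : ∑ x ∈ S, g x = ∑ x ∈ S ∪ S.image (· + c), g x := by
    apply Finset.sum_subset (Finset.subset_union_left)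
    intro x _ hx; exact h1 x hx
  rw [e1, e2, ← e3]

lemma sum_shift' (S : Finset Pt) (g : Pt → ℝ) (c : Pt)
    (h1 : ∀ x ∉ S, g x = 0) (h2 : ∀ x ∉ S, g (x - c) = 0) :
    ∑ x ∈ S, g (x - c) = ∑ x ∈ S, g x := by
  have := sum_shift S g (-c) h1 (fun x hx => by simpa [sub_eq_add_neg] using h2 x hx)
  simpa [sub_eq_add_neg] using this

/-- the enlarged index set for shifts in direction `j` -/
noncomputable def Sbig (Ω : Finset Pt) (j : Fin 3) : Finset Pt :=
  Ω ∪ Ω.image (· + ee j) ∪ Ω.image (· - ee j)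

lemma sub_Sbig (Ω : Finset Pt) (j : Fin 3) : Ω ⊆ Sbig Ω j := by
  intro x hx; exact Finset.mem_union_left _ (Finset.mem_union_left _ hx)

lemma notin_Sbig (Ω : Finset Pt) (j : Fin 3) {x : Pt} (hx : x ∉ Sbig Ω j) :
    x ∉ Ω ∧ x + ee j ∉ Ω ∧ x - ee j ∉ Ω := by
  refine ⟨fun hm => hx (sub_Sbig Ω j hm), fun hm => ?_, fun hm => ?_⟩
  · exact hx (Finset.mem_union_right _ (Finset.mem_image.2 ⟨x + ee j, hm, by simp⟩))
  · exact hx (Finset.mem_union_left _ (Finset.mem_union_right _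
      (Finset.mem_image.2 ⟨x - ee j, hm, by simp⟩)))

end Aux

section SBP

lemma sbp_le (h : ℝ) (hh : 0 < h) (Ω : Finset Pt) (A : ℝ) (hA : 0 < A)
    (hPoin : ∀ φ : Pt → ℝ, (∀ x ∉ Ω, φ x = 0) → (∀ x ∈ bdry Ω, φ x = 0) →
      ∀ i : Fin 3, ∑ x ∈ Ω, (φ x) ^ 2 ≤ A ^ 2 * ∑ x ∈ Ω, (Dp h i φ x) ^ 2)
    (j : Fin 3) (φ : Pt → ℝ) (hφ0 : ∀ x ∉ Ω, φ x = 0) (hφb : ∀ x ∈ bdry Ω, φ x = 0) :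
    ∑ x ∈ Ω, φ x * D2 h j φ x ≤ -((A⁻¹) ^ 2 * ∑ x ∈ Ω, (φ x) ^ 2) := by
  classical
  set e := ee j with he
  set S := Sbig Ω j with hS
  have hz : ∀ x ∉ S, φ x = 0 ∧ φ (x + e) = 0 ∧ φ (x - e) = 0 := by
    intro x hx
    obtain ⟨h1, h2, h3⟩ := notin_Sbig Ω j hx
    exact ⟨hφ0 x h1, hφ0 _ h2, hφ0 _ h3⟩
  -- Step 1 : extend the sum from Ω to S
  have step1 : ∑ x ∈ Ω, φ x * D2 h j φ x = ∑ x ∈ S, φ x * D2 h j φ x := by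
    apply Finset.sum_subset (sub_Sbig Ω j)
    intro x _ hx
    simp [hφ0 x hx]
  -- shift identities
  have shiftA : ∑ x ∈ S, φ x * φ (x - e) = ∑ x ∈ S, φ (x + e) * φ x := by
    have := sum_shift S (fun x => φ x * φ (x - e)) e
      (fun x hx => by simp [(hz x hx).1]) (fun x hx => by simp [(hz x hx).1])
    simpa using this.symm
  have shiftB : ∑ x ∈ S, φ (x + e) ^ 2 = ∑ x ∈ S, φ x ^ 2 := by
    exact sum_shift S (fun x => φ x ^ 2) e
      (fun x hx => by simp [(hz x hx).1]) (fun x hx => by simp [(hz x hx).2.1])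
  -- Step 2 : summation by parts over S
  have step2 : ∑ x ∈ S, φ x * D2 h j φ x = -∑ x ∈ S, (Dp h j φ x) ^ 2 := by
    have l1 : ∑ x ∈ S, φ x * D2 h j φ x
        = (∑ x ∈ S, (φ x * φ (x + e) + φ x * φ (x - e) - 2 * φ x ^ 2)) / h ^ 2 := by
      rw [Finset.sum_div]
      refine Finset.sum_congr rfl fun x _ => ?_
      simp only [D2]; ring
    have l2 : ∑ x ∈ S, (Dp h j φ x) ^ 2
        = (∑ x ∈ S, (φ (x + e) ^ 2 - 2 * (φ (x + e) * φ x) + φ x ^ 2)) / h ^ 2 := by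
      rw [Finset.sum_div]
      refine Finset.sum_congr rfl fun x _ => ?_
      simp only [Dp]
      field_simp
      ring
    rw [l1, l2, ← neg_div]
    congr 1
    have d1 : ∑ x ∈ S, (φ x * φ (x + e) + φ x * φ (x - e) - 2 * φ x ^ 2)
        = ∑ x ∈ S, φ x * φ (x + e) + ∑ x ∈ S, φ x * φ (x - e)
          - 2 * ∑ x ∈ S, φ x ^ 2 := by
      rw [Finset.sum_sub_distrib, Finset.sum_add_distrib, Finset.mul_sum]
    have d2 : ∑ x ∈ S, (φ (x + e) ^ 2 - 2 * (φ (x + e) * φ x) + φ x ^ 2)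
        = ∑ x ∈ S, φ (x + e) ^ 2 - 2 * ∑ x ∈ S, φ (x + e) * φ x
          + ∑ x ∈ S, φ x ^ 2 := by
      rw [Finset.sum_add_distrib, Finset.sum_sub_distrib, Finset.mul_sum]
    have comm : ∑ x ∈ S, φ (x + e) * φ x = ∑ x ∈ S, φ x * φ (x + e) :=
      Finset.sum_congr rfl fun x _ => mul_comm _ _
    rw [d1, d2, shiftA, shiftB, comm]
    ring
  -- Step 3 : restrict the Dp-sum back to Ω and apply Poincaré
  have step3 : ∑ x ∈ Ω, (Dp h j φ x) ^ 2 ≤ ∑ x ∈ S, (Dp h j φ x) ^ 2 :=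
    Finset.sum_le_sum_of_subset_of_nonneg (sub_Sbig Ω j) (fun x _ _ => sq_nonneg _)
  have poin := hPoin φ hφ0 hφb j
  have hA2 : (0:ℝ) < A ^ 2 := by positivity
  have poin' : (A⁻¹) ^ 2 * ∑ x ∈ Ω, (φ x) ^ 2 ≤ ∑ x ∈ Ω, (Dp h j φ x) ^ 2 := by
    rw [inv_pow]
    rw [inv_mul_le_iff₀ hA2]
    linarith
  rw [step1, step2]
  linarith

end SBP

section Adv

lemma adv_j (h : ℝ) (Ω : Finset Pt) (b : Pt → Fin 3 → ℝ) (φ : Pt → ℝ)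
    (hφ0 : ∀ x ∉ Ω, φ x = 0) (j : Fin 3) :
    ∑ x ∈ Ω, φ x * (b (x - ee j) j * Dc h j φ (x - ee j)
        + b (x + ee j) j * Dc h j φ (x + ee j))
      = -∑ x ∈ Ω, φ x ^ 2 * Dc h j (fun y => b y j) x := by
  classical
  set e := ee j with he
  set S := Sbig Ω j with hS
  set β : Pt → ℝ := fun y => b y j with hβ
  have hz : ∀ x ∉ S, φ x = 0 ∧ φ (x + e) = 0 ∧ φ (x - e) = 0 := by
    intro x hx
    obtain ⟨h1, h2, h3⟩ := notin_Sbig Ω j hx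
    exact ⟨hφ0 x h1, hφ0 _ h2, hφ0 _ h3⟩
  have step1 : ∑ x ∈ Ω, φ x * (β (x - e) * Dc h j φ (x - e) + β (x + e) * Dc h j φ (x + e))
      = ∑ x ∈ S, φ x * (β (x - e) * Dc h j φ (x - e) + β (x + e) * Dc h j φ (x + e)) := by
    apply Finset.sum_subset (sub_Sbig Ω j)
    intro x _ hx
    simp [hφ0 x hx]
  have shift1 : ∑ x ∈ S, φ x * (β (x - e) * Dc h j φ (x - e))
      = ∑ x ∈ S, φ (x + e) * (β x * Dc h j φ x) := by
    have := sum_shift' S (fun x => φ (x + e) * (β x * Dc h j φ x)) e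
      (fun x hx => by simp [(hz x hx).2.1]) (fun x hx => by simp [(hz x hx).1])
    simpa using this
  have shift2 : ∑ x ∈ S, φ x * (β (x + e) * Dc h j φ (x + e))
      = ∑ x ∈ S, φ (x - e) * (β x * Dc h j φ x) := by
    have := sum_shift S (fun x => φ (x - e) * (β x * Dc h j φ x)) e
      (fun x hx => by simp [(hz x hx).2.2]) (fun x hx => by simp [(hz x hx).1])
    simpa using this
  have shift3 : ∑ x ∈ S, β x * φ (x + e) ^ 2 = ∑ x ∈ S, β (x - e) * φ x ^ 2 := by
    have := sum_shift S (fun x => β (x - e) * φ x ^ 2) e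
      (fun x hx => by simp [(hz x hx).1]) (fun x hx => by simp [(hz x hx).2.1])
    simpa using this
  have shift4 : ∑ x ∈ S, β x * φ (x - e) ^ 2 = ∑ x ∈ S, β (x + e) * φ x ^ 2 := by
    have := sum_shift' S (fun x => β (x + e) * φ x ^ 2) e
      (fun x hx => by simp [(hz x hx).1]) (fun x hx => by simp [(hz x hx).2.2])
    simpa using this
  have combine : ∑ x ∈ S, φ (x + e) * (β x * Dc h j φ x)
        + ∑ x ∈ S, φ (x - e) * (β x * Dc h j φ x)
      = (∑ x ∈ S, β x * φ (x + e) ^ 2 - ∑ x ∈ S, β x * φ (x - e) ^ 2) / (2 * h) := by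
    rw [← Finset.sum_add_distrib, ← Finset.sum_sub_distrib, Finset.sum_div]
    refine Finset.sum_congr rfl fun x _ => ?_
    simp only [Dc]
    ring
  have final : (∑ x ∈ S, β (x - e) * φ x ^ 2 - ∑ x ∈ S, β (x + e) * φ x ^ 2) / (2 * h)
      = -∑ x ∈ S, φ x ^ 2 * Dc h j β x := by
    rw [← Finset.sum_sub_distrib, ← Finset.sum_neg_distrib, Finset.sum_div]
    refine Finset.sum_congr rfl fun x _ => ?_
    simp only [Dc]
    ring
  have restrict : ∑ x ∈ S, φ x ^ 2 * Dc h j β x = ∑ x ∈ Ω, φ x ^ 2 * Dc h j β x := by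
    symm
    apply Finset.sum_subset (sub_Sbig Ω j)
    intro x _ hx
    simp [hφ0 x hx]
  calc ∑ x ∈ Ω, φ x * (β (x - e) * Dc h j φ (x - e) + β (x + e) * Dc h j φ (x + e))
      = ∑ x ∈ S, φ x * (β (x - e) * Dc h j φ (x - e) + β (x + e) * Dc h j φ (x + e)) := step1
    _ = ∑ x ∈ S, φ x * (β (x - e) * Dc h j φ (x - e))
        + ∑ x ∈ S, φ x * (β (x + e) * Dc h j φ (x + e)) := by
        rw [← Finset.sum_add_distrib]
        exact Finset.sum_congr rfl fun x _ => by ring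
    _ = (∑ x ∈ S, β x * φ (x + e) ^ 2 - ∑ x ∈ S, β x * φ (x - e) ^ 2) / (2 * h) := by
        rw [shift1, shift2, combine]
    _ = (∑ x ∈ S, β (x - e) * φ x ^ 2 - ∑ x ∈ S, β (x + e) * φ x ^ 2) / (2 * h) := by
        rw [shift3, shift4]
    _ = -∑ x ∈ S, φ x ^ 2 * Dc h j β x := final
    _ = -∑ x ∈ Ω, φ x ^ 2 * Dc h j β x := by rw [restrict]

lemma adv_zero (h : ℝ) (Ω : Finset Pt) (b : Pt → Fin 3 → ℝ) (φ : Pt → ℝ)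
    (hφ0 : ∀ x ∉ Ω, φ x = 0) (hφb : ∀ x ∈ bdry Ω, φ x = 0)
    (hdiv : ∀ x ∈ Ω \ bdry Ω, divc h b x = 0) :
    ∑ x ∈ Ω, φ x * (∑ j, (b (x - ee j) j * Dc h j φ (x - ee j)
        + b (x + ee j) j * Dc h j φ (x + ee j))) = 0 := by
  classical
  have swap : ∑ x ∈ Ω, φ x * (∑ j, (b (x - ee j) j * Dc h j φ (x - ee j)
        + b (x + ee j) j * Dc h j φ (x + ee j)))
      = ∑ j : Fin 3, ∑ x ∈ Ω, φ x * (b (x - ee j) j * Dc h j φ (x - ee j)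
        + b (x + ee j) j * Dc h j φ (x + ee j)) := by
    rw [Finset.sum_comm]
    refine Finset.sum_congr rfl fun x _ => ?_
    rw [Finset.mul_sum]
  rw [swap]
  have : ∀ j : Fin 3, ∑ x ∈ Ω, φ x * (b (x - ee j) j * Dc h j φ (x - ee j)
        + b (x + ee j) j * Dc h j φ (x + ee j))
      = -∑ x ∈ Ω, φ x ^ 2 * Dc h j (fun y => b y j) x := fun j => adv_j h Ω b φ hφ0 j
  rw [Finset.sum_congr rfl fun j _ => this j]
  rw [Finset.sum_neg_distrib, neg_eq_zero, Finset.sum_comm]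
  apply Finset.sum_eq_zero
  intro x hx
  have hcol : ∑ j : Fin 3, φ x ^ 2 * Dc h j (fun y => b y j) x = φ x ^ 2 * divc h b x := by
    rw [divc, Finset.mul_sum]
  rw [hcol]
  by_cases hb : x ∈ bdry Ω
  · simp [hφb x hb]
  · simp [hdiv x (Finset.mem_sdiff.2 ⟨hx, hb⟩)]

end Adv

/-- Damped energy estimate (proof of Theorem 2.11): with the discrete Poincaré
constant `A`, the implicit step solution satisfies
`‖ũⁿ⁺¹‖ ≤ (1 + 3A⁻²τ)⁻¹ (‖uⁿ‖ + τ‖fⁿ‖)`. -/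
theorem implicit_step_damped_estimate (h τ : ℝ) (hh : 0 < h) (hτ : 0 < τ)
    (Ω : Finset Pt) (A : ℝ) (hA : 0 < A)
    -- discrete Poincaré type inequality I with constant A
    (hPoin : ∀ φ : Pt → ℝ, (∀ x ∉ Ω, φ x = 0) → (∀ x ∈ bdry Ω, φ x = 0) →
      ∀ i : Fin 3, ∑ x ∈ Ω, (φ x) ^ 2 ≤ A ^ 2 * ∑ x ∈ Ω, (Dp h i φ x) ^ 2)
    (un f ut : Pt → Fin 3 → ℝ)
    (hun0 : ∀ x ∉ Ω, un x = 0)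
    (hdiv : ∀ x ∈ Ω \ bdry Ω, divc h un x = 0)
    (hunb : ∀ x ∈ bdry Ω, un x = 0)
    (hut0 : ∀ x ∉ Ω, ut x = 0) (hutb : ∀ x ∈ bdry Ω, ut x = 0)
    (heq : ∀ x ∈ Ω \ bdry Ω, ∀ i : Fin 3,
      (ut x i - un x i) / τ =
        -(1 / 2) * (∑ j, (un (x - ee j) j * Dc h j (fun y => ut y i) (x - ee j)
            + un (x + ee j) j * Dc h j (fun y => ut y i) (x + ee j)))
        + (∑ j, D2 h j (fun y => ut y i) x) + f x i) :
    dnorm h Ω ut ≤ (1 + 3 * (A⁻¹) ^ 2 * τ)⁻¹ * (dnorm h Ω un + τ * dnorm h Ω f) := by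
  classical
  set Aterm : Pt → Fin 3 → ℝ := fun x i =>
    ∑ j, (un (x - ee j) j * Dc h j (fun y => ut y i) (x - ee j)
      + un (x + ee j) j * Dc h j (fun y => ut y i) (x + ee j)) with hAterm
  set Dterm : Pt → Fin 3 → ℝ := fun x i => ∑ j, D2 h j (fun y => ut y i) x with hDterm
  set Nt := ∑ x ∈ Ω, ∑ i, (ut x i) ^ 2 with hNtdef
  set Nu := ∑ x ∈ Ω, ∑ i, (un x i) ^ 2 with hNudef
  set Nf := ∑ x ∈ Ω, ∑ i, (f x i) ^ 2 with hNfdef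
  set SA := ∑ x ∈ Ω, ∑ i, ut x i * Aterm x i with hSAdef
  set SD := ∑ x ∈ Ω, ∑ i, ut x i * Dterm x i with hSDdef
  set SF := ∑ x ∈ Ω, ∑ i, ut x i * f x i with hSFdef
  set SU := ∑ x ∈ Ω, ∑ i, ut x i * un x i with hSUdef
  -- pointwise energy identity
  have hx_eq : ∀ x ∈ Ω, ∀ i : Fin 3,
      ut x i ^ 2 - ut x i * un x i
        = τ * (ut x i * (-(1/2) * Aterm x i + Dterm x i + f x i)) := by
    intro x hx i
    by_cases hb : x ∈ bdry Ω
    · have h0 : ut x i = 0 := congrFun (hutb x hb) i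
      simp [h0]
    · have hxi : x ∈ Ω \ bdry Ω := Finset.mem_sdiff.2 ⟨hx, hb⟩
      have hq := heq x hxi i
      have h2 : ut x i - un x i = (-(1/2) * Aterm x i + Dterm x i + f x i) * τ :=
        (div_eq_iff hτ.ne').1 hq
      calc ut x i ^ 2 - ut x i * un x i = ut x i * (ut x i - un x i) := by ring
        _ = ut x i * ((-(1/2) * Aterm x i + Dterm x i + f x i) * τ) := by rw [h2]
        _ = τ * (ut x i * (-(1/2) * Aterm x i + Dterm x i + f x i)) := by ring
  -- summed energy identity
  have key : Nt - SU = τ * (-(1/2) * SA + SD + SF) := by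
    have e1 : Nt - SU = ∑ x ∈ Ω, ∑ i, (ut x i ^ 2 - ut x i * un x i) := by
      rw [hNtdef, hSUdef, ← Finset.sum_sub_distrib]
      exact Finset.sum_congr rfl fun x _ => (Finset.sum_sub_distrib _ _).symm
    have e2 : ∑ x ∈ Ω, ∑ i, (ut x i ^ 2 - ut x i * un x i)
        = ∑ x ∈ Ω, ∑ i, τ * (ut x i * (-(1/2) * Aterm x i + Dterm x i + f x i)) :=
      Finset.sum_congr rfl fun x hx => Finset.sum_congr rfl fun i _ => hx_eq x hx i
    have e3 : ∑ x ∈ Ω, ∑ i, τ * (ut x i * (-(1/2) * Aterm x i + Dterm x i + f x i))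
        = τ * ∑ x ∈ Ω, ∑ i, (-(1/2) * (ut x i * Aterm x i)
            + ut x i * Dterm x i + ut x i * f x i) := by
      rw [Finset.mul_sum]
      refine Finset.sum_congr rfl fun x _ => ?_
      rw [Finset.mul_sum]
      exact Finset.sum_congr rfl fun i _ => by ring
    have e4 : ∑ x ∈ Ω, ∑ i, (-(1/2) * (ut x i * Aterm x i)
          + ut x i * Dterm x i + ut x i * f x i)
        = -(1/2) * SA + SD + SF := by
      rw [hSAdef, hSDdef, hSFdef]
      rw [Finset.mul_sum, ← Finset.sum_add_distrib, ← Finset.sum_add_distrib]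
      refine Finset.sum_congr rfl fun x _ => ?_
      rw [Finset.mul_sum, ← Finset.sum_add_distrib, ← Finset.sum_add_distrib]
    rw [e1, e2, e3, e4]
  -- the advection term vanishes
  have hSA : SA = 0 := by
    rw [hSAdef, Finset.sum_comm]
    apply Finset.sum_eq_zero
    intro i _
    exact adv_zero h Ω un (fun x => ut x i)
      (fun x hx => congrFun (hut0 x hx) i)
      (fun x hx => congrFun (hutb x hx) i) hdiv
  -- the diffusion term gives damping
  have hSD : SD ≤ -(3 * (A⁻¹) ^ 2 * Nt) := by
    have e : SD = ∑ i : Fin 3, ∑ j : Fin 3, ∑ x ∈ Ω, ut x i * D2 h j (fun y => ut y i) x := by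
      rw [hSDdef, Finset.sum_comm]
      refine Finset.sum_congr rfl fun i _ => ?_
      rw [← Finset.sum_comm]
      refine Finset.sum_congr rfl fun x _ => ?_
      rw [hDterm]
      exact Finset.mul_sum _ _ _
    have per : ∀ i j : Fin 3, ∑ x ∈ Ω, ut x i * D2 h j (fun y => ut y i) x
        ≤ -((A⁻¹) ^ 2 * ∑ x ∈ Ω, (ut x i) ^ 2) := fun i j =>
      sbp_le h hh Ω A hA hPoin j (fun x => ut x i)
        (fun x hx => congrFun (hut0 x hx) i)
        (fun x hx => congrFun (hutb x hx) i)
    have hcomm : ∑ i : Fin 3, ∑ x ∈ Ω, (ut x i) ^ 2 = Nt := by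
      rw [hNtdef]; exact Finset.sum_comm
    calc SD = ∑ i : Fin 3, ∑ j : Fin 3, ∑ x ∈ Ω, ut x i * D2 h j (fun y => ut y i) x := e
      _ ≤ ∑ i : Fin 3, ∑ j : Fin 3, -((A⁻¹) ^ 2 * ∑ x ∈ Ω, (ut x i) ^ 2) := by
          apply Finset.sum_le_sum; intro i _
          apply Finset.sum_le_sum; intro j _
          exact per i j
      _ = ∑ i : Fin 3, -(3 * (A⁻¹) ^ 2 * ∑ x ∈ Ω, (ut x i) ^ 2) := by
          refine Finset.sum_congr rfl fun i _ => ?_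
          simp only [Finset.sum_const, Finset.card_univ, Fintype.card_fin, nsmul_eq_mul]
          push_cast; ring
      _ = -(3 * (A⁻¹) ^ 2 * Nt) := by
          rw [Finset.sum_neg_distrib, ← hcomm, Finset.mul_sum]
  -- Cauchy-Schwarz
  have cs : ∀ v w : Pt → Fin 3 → ℝ, ∑ x ∈ Ω, ∑ i, v x i * w x i
      ≤ Real.sqrt (∑ x ∈ Ω, ∑ i, (v x i) ^ 2) * Real.sqrt (∑ x ∈ Ω, ∑ i, (w x i) ^ 2) := by
    intro v w
    have := Real.sum_mul_le_sqrt_mul_sqrt (Ω ×ˢ (Finset.univ : Finset (Fin 3)))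
      (fun p => v p.1 p.2) (fun p => w p.1 p.2)
    simpa [Finset.sum_product] using this
  set nt := Real.sqrt Nt with hntdef
  set nu := Real.sqrt Nu with hnudef
  set nf := Real.sqrt Nf with hnfdef
  have hNt0 : 0 ≤ Nt := Finset.sum_nonneg fun x _ => Finset.sum_nonneg fun i _ => sq_nonneg _
  have hnt2 : nt ^ 2 = Nt := Real.sq_sqrt hNt0
  have hnt0 : 0 ≤ nt := Real.sqrt_nonneg _
  have hnu0 : 0 ≤ nu := Real.sqrt_nonneg _
  have hnf0 : 0 ≤ nf := Real.sqrt_nonneg _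
  have hSU : SU ≤ nt * nu := cs ut un
  have hSF : SF ≤ nt * nf := cs ut f
  set d := 1 + 3 * (A⁻¹) ^ 2 * τ with hddef
  have hd : 0 < d := by positivity
  -- main unscaled estimate
  have hq : d * nt ^ 2 ≤ nt * (nu + τ * nf) := by
    rw [hnt2]
    have t1 : τ * SD ≤ τ * (-(3 * (A⁻¹) ^ 2 * Nt)) := mul_le_mul_of_nonneg_left hSD hτ.le
    have t2 : τ * SF ≤ τ * (nt * nf) := mul_le_mul_of_nonneg_left hSF hτ.le
    have key' : Nt = SU + τ * SD + τ * SF := by rw [hSA] at key; linarith [key]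
    rw [hddef]
    nlinarith [t1, t2, hSU, key']
  have main : nt ≤ d⁻¹ * (nu + τ * nf) := by
    rcases eq_or_lt_of_le hnt0 with h0 | h0
    · rw [← h0]
      positivity
    · have hdn : d * nt ≤ nu + τ * nf := by
        apply le_of_mul_le_mul_right _ h0
        nlinarith [hq]
      calc nt = d⁻¹ * (d * nt) := by field_simp
        _ ≤ d⁻¹ * (nu + τ * nf) := mul_le_mul_of_nonneg_left hdn (inv_nonneg.2 hd.le)
  -- rescale to dnorm
  have hdn : ∀ u : Pt → Fin 3 → ℝ,
      dnorm h Ω u = Real.sqrt (∑ x ∈ Ω, ∑ i, (u x i) ^ 2) * Real.sqrt (h ^ 3) := by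
    intro u
    rw [dnorm, ← Finset.sum_mul]
    exact Real.sqrt_mul (Finset.sum_nonneg fun x _ => Finset.sum_nonneg fun i _ => sq_nonneg _) _
  rw [hdn ut, hdn un, hdn f]
  have hs : 0 ≤ Real.sqrt (h ^ 3) := Real.sqrt_nonneg _
  calc nt * Real.sqrt (h ^ 3) ≤ (d⁻¹ * (nu + τ * nf)) * Real.sqrt (h ^ 3) :=
        mul_le_mul_of_nonneg_right main hs
    _ = d⁻¹ * (nu * Real.sqrt (h ^ 3) + τ * (nf * Real.sqrt (h ^ 3))) := by ring
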